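/- Let L ≥ 1 and let Z be a real-valued random variable with |Z| ≤ L almost surely. Then |tanh(E Z) − E tanh(Z)| ≤ 20 L · E|tanh(Z) − E tanh(Z)|. -/

import Mathlib

open MeasureTheory

noncomputable section

namespace Paper

/-- The Boolean hypercube `{-1,1}^n` as a finite set of vectors in `ℝ^n`. -/
def cube (n : ℕ) : Finset (Fin n → ℝ) := Fintype.piFinset fun _ => ({-1, 1} : Finset ℝ)

/-- The ℓ¹ norm of a vector. -/
def onorm {n : ℕ} (v : Fin n → ℝ) : ℝ := ∑ i, |v i|

/-- The Euclidean (ℓ²) norm of a vector. -/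
def tnorm {n : ℕ} (v : Fin n → ℝ) : ℝ := Real.sqrt (∑ i, (v i) ^ 2)

/-- Discrete derivative of `f` at coordinate `i`. -/
def dd {n : ℕ} (f : (Fin n → ℝ) → ℝ) (i : Fin n) (y : Fin n → ℝ) : ℝ :=
  (f (Function.update y i 1) - f (Function.update y i (-1))) / 2

/-- Discrete gradient of `f`. -/
def dgrad {n : ℕ} (f : (Fin n → ℝ) → ℝ) (y : Fin n → ℝ) : Fin n → ℝ := fun i => dd f i y

/-- The multilinear (harmonic) extension of `f : C_n → ℝ` to `[-1,1]^n`. -/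
def mlext {n : ℕ} (f : (Fin n → ℝ) → ℝ) (x : Fin n → ℝ) : ℝ :=
  ∑ S : Finset (Fin n),
    (((2 : ℝ) ^ n)⁻¹ * ∑ y ∈ cube n, f y * ∏ i ∈ S, y i) * ∏ i ∈ S, x i

/-- The multilinear extension of the discrete gradient of `f`. -/
def mlgrad {n : ℕ} (f : (Fin n → ℝ) → ℝ) (x : Fin n → ℝ) : Fin n → ℝ :=
  fun i => mlext (dd f i) x

/-- The Lipschitz constant `Lip(f) = max_{i,y∈C_n} |∂_i f(y)|`. -/
def lip {n : ℕ} (f : (Fin n → ℝ) → ℝ) : ℝ :=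
  sSup {a | ∃ i : Fin n, ∃ y ∈ cube n, a = |dd f i y|}

/-- The Lipschitz constant of the discrete gradient:
`max_{x ≠ y ∈ C_n} ‖∇f(x) - ∇f(y)‖₁ / ‖x - y‖₁`. -/
def gradLip {n : ℕ} (f : (Fin n → ℝ) → ℝ) : ℝ :=
  sSup {a | ∃ x ∈ cube n, ∃ y ∈ cube n, x ≠ y ∧
    a = onorm (dgrad f x - dgrad f y) / onorm (x - y)}

/-- Gaussian width of a set `K ⊆ ℝ^n`. -/
def gaussianWidth {n : ℕ} (K : Set (Fin n → ℝ)) : ℝ :=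
  ∫ θ, sSup ((fun v => ∑ i, v i * θ i) '' K)
    ∂(Measure.pi fun _ : Fin n => ProbabilityTheory.gaussianReal 0 1)

/-- Gradient complexity `D(f) = GW({∇f(y) : y ∈ C_n} ∪ {0})`. -/
def gradComplexity {n : ℕ} (f : (Fin n → ℝ) → ℝ) : ℝ :=
  gaussianWidth ((dgrad f '' (cube n : Set (Fin n → ℝ))) ∪ {0})

/-- The Gibbs distribution with Hamiltonian `f`, as a weight function on `ℝ^n`
supported on the cube. -/
def gibbs {n : ℕ} (f : (Fin n → ℝ) → ℝ) (y : Fin n → ℝ) : ℝ :=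
  if y ∈ cube n then Real.exp (f y) / ∑ z ∈ cube n, Real.exp (f z) else 0

/-- The tilt `τ_θ p` of a weight function `p` on the cube. -/
def tilt {n : ℕ} (p : (Fin n → ℝ) → ℝ) (θ : Fin n → ℝ) (y : Fin n → ℝ) : ℝ :=
  p y * Real.exp (∑ i, θ i * y i) / ∑ z ∈ cube n, p z * Real.exp (∑ i, θ i * z i)

/-- The mean (center of mass) of the tilted measure `τ_θ p`. -/
def tiltMean {n : ℕ} (p : (Fin n → ℝ) → ℝ) (θ : Fin n → ℝ) : Fin n → ℝ :=
  fun i => ∑ y ∈ cube n, tilt p θ y * y i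

/-- A weight function on the cube is a product measure: the coordinates are
independent Bernoulli-type variables. -/
def IsProduct {n : ℕ} (ξ : (Fin n → ℝ) → ℝ) : Prop :=
  (∀ y, y ∉ cube n → ξ y = 0) ∧
  ∃ q : Fin n → ℝ, (∀ i, q i ∈ Set.Icc (0 : ℝ) 1) ∧
    ∀ y ∈ cube n, ξ y = ∏ i, (if y i = 1 then q i else 1 - q i)

/-- The Wasserstein (transportation) distance between two weight functions on the cube. -/
def W1 {n : ℕ} (p q : (Fin n → ℝ) → ℝ) : ℝ :=
  sInf {w | ∃ π : (Fin n → ℝ) × (Fin n → ℝ) → ℝ,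
    (∀ a, 0 ≤ π a) ∧
    (∀ x, ∑ y ∈ cube n, π (x, y) = p x) ∧
    (∀ y, ∑ x ∈ cube n, π (x, y) = q y) ∧
    w = (1 / 2) * ∑ x ∈ cube n, ∑ y ∈ cube n, π (x, y) * onorm (x - y)}

/-- `p` (the law of a random vector on the cube) is a `(ρ,δ,ε)`-tilt-mixture. -/
def IsTiltMixture {n : ℕ} (p : (Fin n → ℝ) → ℝ) (ρ : Measure (Fin n → ℝ))
    (δ ε : ℝ) : Prop :=
  ∃ m : Measure (Fin n → ℝ), IsProbabilityMeasure m ∧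
    m {θ | ¬ (tnorm θ ≤ ε * Real.sqrt n ∧ ∀ i, |θ i| ≤ 1 / 4)} = 0 ∧
    (∀ φ : (Fin n → ℝ) → ℝ,
      ∑ y ∈ cube n, φ y * p y = ∫ θ, ∑ y ∈ cube n, φ y * tilt p θ y ∂m) ∧
    ENNReal.ofReal (1 - δ) <
      m {θ | ∃ ξ, IsProduct ξ ∧ W1 (tilt p θ) ξ ≤ δ * n} ∧
    ρ = m.map (tiltMean p)

/-- The product weight on the cube with mean vector `z ∈ [-1,1]^n`:
the law of `X(z)`. -/
def prodW {n : ℕ} (z : Fin n → ℝ) (y : Fin n → ℝ) : ℝ := ∏ i, (1 + y i * z i) / 2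

/-- `q` (the law of a random vector `X` on the cube) is a `(ρ,δ)`-mixture:
there is a coupling of `X(ρ)` and `X` with `E‖X(ρ) - X‖₁ ≤ δ n`. -/
def IsMixture {n : ℕ} (q : (Fin n → ℝ) → ℝ) (ρ : Measure (Fin n → ℝ)) (δ : ℝ) : Prop :=
  ∃ π : (Fin n → ℝ) × (Fin n → ℝ) → ℝ,
    (∀ a, 0 ≤ π a) ∧
    (∀ x ∈ cube n, ∑ y ∈ cube n, π (x, y) = ∫ z, prodW z x ∂ρ) ∧
    (∀ y, ∑ x ∈ cube n, π (x, y) = q y) ∧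
    ∑ x ∈ cube n, ∑ y ∈ cube n, π (x, y) * onorm (x - y) ≤ δ * n

/-- `f_ν = log(dν/dμ)` for a weight function `p` on the cube (`μ` uniform). -/
def hamOf {n : ℕ} (p : (Fin n → ℝ) → ℝ) : (Fin n → ℝ) → ℝ :=
  fun y => Real.log ((2 : ℝ) ^ n * p y)

/-- `Tr(H(ν))` for a weight function `p` on the cube. -/
def traceH {n : ℕ} (p : (Fin n → ℝ) → ℝ) : ℝ :=
  ∑ i, ((∑ y ∈ cube n, p y * (Real.tanh (dd (hamOf p) i y)) ^ 2) -
    (∑ y ∈ cube n, p y * Real.tanh (dd (hamOf p) i y)) ^ 2)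

private lemma tanh_eq' (z : ℝ) :
    Real.tanh z = (Real.exp (2*z) - 1) / (Real.exp (2*z) + 1) := by
  have h : Real.exp z ≠ 0 := (Real.exp_pos z).ne'
  have h2 : (0:ℝ) < Real.exp z + Real.exp (-z) := by positivity
  rw [Real.tanh_eq_sinh_div_cosh, Real.sinh_eq, Real.cosh_eq,
    show (2:ℝ)*z = z + z by ring, Real.exp_add, Real.exp_neg]
  have h3 : Real.exp z + (Real.exp z)⁻¹ ≠ 0 := by positivity
  field_simp

private lemma tanh_mono {x y : ℝ} (h : x ≤ y) : Real.tanh x ≤ Real.tanh y := by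
  rw [tanh_eq', tanh_eq']
  have hA : (0:ℝ) < Real.exp (2*x) := Real.exp_pos _
  have hB : (0:ℝ) < Real.exp (2*y) := Real.exp_pos _
  have hAB : Real.exp (2*x) ≤ Real.exp (2*y) := Real.exp_le_exp.2 (by linarith)
  rw [div_le_div_iff₀ (by linarith) (by linarith)]
  nlinarith

private lemma abs_tanh_lt_one (z : ℝ) : |Real.tanh z| < 1 := by
  rw [tanh_eq']
  have hA : (0:ℝ) < Real.exp (2*z) := Real.exp_pos _
  rw [abs_lt, div_lt_iff₀ (by linarith), lt_div_iff₀ (by linarith)]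
  constructor <;> nlinarith

private lemma one_sub_tanh_pos (z : ℝ) : 0 < 1 - Real.tanh z := by
  have := abs_tanh_lt_one z; rw [abs_lt] at this; linarith

private lemma one_add_tanh_pos (z : ℝ) : 0 < 1 + Real.tanh z := by
  have := abs_tanh_lt_one z; rw [abs_lt] at this; linarith

private lemma exp_neg_le_one_sub_tanh {L : ℝ} (hL : 0 ≤ L) :
    Real.exp (-(2*L)) ≤ 1 - Real.tanh L := by
  rw [tanh_eq']
  have hA : (0:ℝ) < Real.exp (2*L) := Real.exp_pos _
  have h1 : (1:ℝ) ≤ Real.exp (2*L) := by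
    rw [show (1:ℝ) = Real.exp 0 by simp]; exact Real.exp_le_exp.2 (by linarith)
  have hrw : 1 - (Real.exp (2*L) - 1) / (Real.exp (2*L) + 1) = 2 / (Real.exp (2*L) + 1) := by
    field_simp
    norm_num
  rw [hrw, Real.exp_neg, inv_le_iff_one_le_mul₀ hA, div_mul_eq_mul_div, le_div_iff₀ (by linarith)]
  nlinarith

/-- Claim C : algebraic core inequality. -/
private lemma claimC {b : ℝ} (a : ℝ) (hb1 : -1 < b) (hb2 : b < 1) :
    Real.tanh a - b ≤ (1 - b) * max 0 (2*a - Real.log ((1+b)/(1-b))) := by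
  have hb1' : (0:ℝ) < 1 + b := by linarith
  have hb2' : (0:ℝ) < 1 - b := by linarith
  set γ : ℝ := (1+b)/(1-b) with hγ
  have hγpos : 0 < γ := by positivity
  have hbγ : b = (γ - 1) / (γ + 1) := by
    rw [hγ]; field_simp; ring
  set α : ℝ := Real.exp (2*a) with hα
  have hαpos : 0 < α := Real.exp_pos _
  by_cases hcase : α ≤ γ
  · have : Real.tanh a ≤ b := by
      rw [tanh_eq', hbγ, div_le_div_iff₀ (by linarith) (by linarith)]
      nlinarith
    have hmax : 0 ≤ max 0 (2*a - Real.log γ) := le_max_left _ _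
    nlinarith
  · push_neg at hcase
    have hs : 0 < 2*a - Real.log γ := by
      have := Real.log_lt_log hγpos hcase
      rw [hα, Real.log_exp] at this; linarith
    rw [max_eq_right hs.le]
    have hexp : Real.exp (-(2*a - Real.log γ)) = γ / α := by
      rw [Real.exp_neg, Real.exp_sub, Real.exp_log hγpos, hα]
      field_simp
    have h1 : 1 - γ/α ≤ 2*a - Real.log γ := by
      have := Real.add_one_le_exp (-(2*a - Real.log γ))
      rw [hexp] at this; linarith
    have h2 : Real.tanh a - b ≤ (1 - b) * (1 - γ/α) := by
      rw [tanh_eq', hbγ, ← hα]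
      have e1 : 1 - (γ-1)/(γ+1) = 2/(γ+1) := by
        field_simp
        norm_num
      have e2 : 1 - γ/α = (α-γ)/α := by field_simp
      have hd1 : (0:ℝ) < (α+1)*(γ+1) := by positivity
      have hd2 : (0:ℝ) < (γ+1)*α := by positivity
      rw [e1, e2, div_mul_div_comm,
        div_sub_div _ _ (by positivity : ((α:ℝ)+1) ≠ 0) (by positivity : ((γ:ℝ)+1) ≠ 0),
        div_le_div_iff₀ hd1 hd2]
      nlinarith [mul_pos (sub_pos.2 hcase) (show (0:ℝ) < γ+1 by linarith)]
    nlinarith [mul_le_mul_of_nonneg_left h1 hb2'.le]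

/-- Pointwise log bound (Lemma P). -/
private lemma lemmaP {L u v : ℝ} (hL : 1 ≤ L) (hu : |u| ≤ Real.tanh L) (hv : |v| ≤ Real.tanh L) :
    Real.log (1 - v) - Real.log (1 - u) ≤ 6*L*|u - v|/(1 - v) := by
  have htL : Real.tanh L < 1 := by have := abs_tanh_lt_one L; rw [abs_lt] at this; linarith
  rw [abs_le] at hu hv
  have hu1 : 0 < 1 - u := by linarith
  have hv1 : 0 < 1 - v := by linarith
  rcases le_or_gt u v with h | h
  · have hlog : Real.log (1 - v) ≤ Real.log (1 - u) := Real.log_le_log hv1 (by linarith : (1:ℝ) - v ≤ 1 - u)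
    have : 0 ≤ 6*L*|u-v|/(1-v) := by positivity
    linarith
  · have habs : |u - v| = u - v := abs_of_pos (by linarith)
    rcases le_or_gt u (v + (1-v)/2) with h2 | h2
    · have hu2 : (1-v)/2 ≤ 1 - u := by linarith
      have key : Real.log (1-v) - Real.log (1-u) ≤ (1-v)/(1-u) - 1 := by
        have := Real.log_le_sub_one_of_pos (show 0 < (1-v)/(1-u) by positivity)
        rw [Real.log_div hv1.ne' hu1.ne'] at this; linarith
      have e1 : (1-v)/(1-u) - 1 = (u - v)/(1-u) := by field_simp; ring
      have e2 : (u-v)/(1-u) ≤ 2*(u-v)/(1-v) := by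
        rw [div_le_div_iff₀ hu1 hv1]; nlinarith
      have e3 : 2*(u-v)/(1-v) ≤ 6*L*|u-v|/(1-v) := by
        rw [habs, div_le_div_iff₀ hv1 hv1]
        nlinarith [mul_pos (sub_pos.2 h) hv1, hL]
      linarith
    · -- far case
      have hexp : Real.exp (-(2*L)) ≤ 1 - u := by
        calc Real.exp (-(2*L)) ≤ 1 - Real.tanh L := exp_neg_le_one_sub_tanh (by linarith)
          _ ≤ 1 - u := by linarith
      have hlog1 : Real.log (1 - v) ≤ 1 := by
        calc Real.log (1-v) ≤ (1-v) - 1 := Real.log_le_sub_one_of_pos hv1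
          _ ≤ 1 := by linarith
      have hlog2 : -(2*L) ≤ Real.log (1-u) := by
        calc -(2*L) = Real.log (Real.exp (-(2*L))) := (Real.log_exp _).symm
          _ ≤ Real.log (1-u) := Real.log_le_log (Real.exp_pos _) hexp
      have hlhs : Real.log (1-v) - Real.log (1-u) ≤ 3*L := by linarith
      have hrhs : 3*L ≤ 6*L*|u-v|/(1-v) := by
        rw [habs, le_div_iff₀ hv1]; nlinarith
      linarith

private lemma continuous_tanh' : Continuous Real.tanh := by
  have h : Real.tanh = fun z => Real.sinh z / Real.cosh z :=
    funext fun z => Real.tanh_eq_sinh_div_cosh z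
  rw [h]
  exact Real.continuous_sinh.div Real.continuous_cosh fun x => (Real.cosh_pos x).ne'

private lemma log_tanh_identity (z : ℝ) :
    Real.log (1 + Real.tanh z) - Real.log (1 - Real.tanh z) = 2 * z := by
  have hx : (0:ℝ) < Real.exp (2*z) := Real.exp_pos _
  have e1 : 1 + Real.tanh z = 2 * Real.exp (2*z) / (Real.exp (2*z) + 1) := by
    rw [tanh_eq']; field_simp; ring
  have e2 : 1 - Real.tanh z = 2 / (Real.exp (2*z) + 1) := by
    rw [tanh_eq']; field_simp; norm_num
  rw [e1, e2, Real.log_div (by positivity) (by positivity),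
    Real.log_div (by positivity) (by positivity),
    Real.log_mul (by norm_num) hx.ne', Real.log_exp]
  ring

private lemma abs_log_bound {L w : ℝ} (hL : 1 ≤ L) (hw : |w| ≤ Real.tanh L) :
    |Real.log (1 - w)| ≤ 2 * L + 1 := by
  rw [abs_le] at hw
  have h1 : Real.exp (-(2*L)) ≤ 1 - w := by
    have := exp_neg_le_one_sub_tanh (show (0:ℝ) ≤ L by linarith)
    linarith
  have h2 : (0:ℝ) < 1 - w := lt_of_lt_of_le (Real.exp_pos _) h1
  have hup : Real.log (1 - w) ≤ 2*L + 1 := by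
    have h3 := Real.log_le_sub_one_of_pos h2
    have h4 := abs_tanh_lt_one L
    rw [abs_lt] at h4
    linarith [hw.1]
  have hlo : -(2*L + 1) ≤ Real.log (1 - w) := by
    have := Real.log_le_log (Real.exp_pos _) h1
    rw [Real.log_exp] at this
    linarith
  rw [abs_le]; exact ⟨hlo, hup⟩

private lemma one_sided {Ω : Type*} [MeasurableSpace Ω]
    (P : Measure Ω) [IsProbabilityMeasure P]
    (Z : Ω → ℝ) (hZmeas : AEStronglyMeasurable Z P)
    (L : ℝ) (hL : 1 ≤ L) (hbdd : ∀ᵐ ω ∂P, |Z ω| ≤ L) :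
    Real.tanh (∫ ω, Z ω ∂P) - ∫ ω, Real.tanh (Z ω) ∂P ≤
      20 * L * ∫ ω, |Real.tanh (Z ω) - ∫ ω', Real.tanh (Z ω') ∂P| ∂P := by
  set a := ∫ ω, Z ω ∂P with ha
  set b := ∫ ω, Real.tanh (Z ω) ∂P with hb
  set D := ∫ ω, |Real.tanh (Z ω) - b| ∂P with hD
  clear_value a b D
  have hTmeas : AEStronglyMeasurable (fun ω => Real.tanh (Z ω)) P :=
    continuous_tanh'.comp_aestronglyMeasurable hZmeas
  have hTbdd : ∀ᵐ ω ∂P, |Real.tanh (Z ω)| ≤ Real.tanh L := by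
    filter_upwards [hbdd] with ω h
    rw [abs_le] at h ⊢
    constructor
    · have := tanh_mono h.1; rwa [Real.tanh_neg] at this
    · exact tanh_mono h.2
  have hintT : Integrable (fun ω => Real.tanh (Z ω)) P :=
    (integrable_const (Real.tanh L)).mono' hTmeas
      (hTbdd.mono fun ω h => by rwa [Real.norm_eq_abs])
  have hintTsub : Integrable (fun ω => Real.tanh (Z ω) - b) P := hintT.sub (integrable_const b)
  have hintD : Integrable (fun ω => |Real.tanh (Z ω) - b|) P := hintTsub.abs
  have hDnn : 0 ≤ D := by
    rw [hD]; exact integral_nonneg fun ω => abs_nonneg _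
  have htL1 : Real.tanh L < 1 := by have := one_sub_tanh_pos L; linarith
  have htL0 : 0 ≤ Real.tanh L := by
    have := tanh_mono (show (0:ℝ) ≤ L by linarith); rwa [Real.tanh_zero] at this
  have hbabs : |b| ≤ Real.tanh L := by
    have h1 : |b| ≤ ∫ ω, |Real.tanh (Z ω)| ∂P := by
      rw [hb]
      simpa [Real.norm_eq_abs] using
        norm_integral_le_integral_norm (μ := P) (fun ω => Real.tanh (Z ω))
    have h2 : (∫ ω, |Real.tanh (Z ω)| ∂P) ≤ ∫ _ω, Real.tanh L ∂P :=
      integral_mono_ae hintT.abs (integrable_const _) hTbdd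
    simp only [integral_const, probReal_univ, smul_eq_mul, one_mul] at h2
    linarith
  have hb2 : b < 1 := lt_of_le_of_lt (le_abs_self b) (lt_of_le_of_lt hbabs htL1)
  have hb1 : -1 < b := by
    have := neg_abs_le b; have : -Real.tanh L ≤ b := by
      have := neg_abs_le b; linarith [neg_le_neg hbabs]
    linarith
  have h1b : (0:ℝ) < 1 - b := by linarith
  have h01b : (0:ℝ) < 1 + b := by linarith
  -- integrability of logs
  have hlog1meas : AEStronglyMeasurable (fun ω => Real.log (1 + Real.tanh (Z ω))) P :=
    (Real.measurable_log.comp_aemeasurable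
      (aemeasurable_const.add hTmeas.aemeasurable)).aestronglyMeasurable
  have hlog2meas : AEStronglyMeasurable (fun ω => Real.log (1 - Real.tanh (Z ω))) P :=
    (Real.measurable_log.comp_aemeasurable
      (aemeasurable_const.sub hTmeas.aemeasurable)).aestronglyMeasurable
  have hintlog1 : Integrable (fun ω => Real.log (1 + Real.tanh (Z ω))) P := by
    refine (integrable_const (2*L+1)).mono' hlog1meas ?_
    filter_upwards [hTbdd] with ω h
    rw [Real.norm_eq_abs]
    have := abs_log_bound hL (w := -(Real.tanh (Z ω))) (by rwa [abs_neg])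
    simpa [sub_neg_eq_add] using this
  have hintlog2 : Integrable (fun ω => Real.log (1 - Real.tanh (Z ω))) P := by
    refine (integrable_const (2*L+1)).mono' hlog2meas ?_
    filter_upwards [hTbdd] with ω h
    rw [Real.norm_eq_abs]
    exact abs_log_bound hL h
  -- 2a = ∫ log(1+T) - ∫ log(1-T)
  have h2a : 2 * a = (∫ ω, Real.log (1 + Real.tanh (Z ω)) ∂P)
      - ∫ ω, Real.log (1 - Real.tanh (Z ω)) ∂P := by
    rw [← integral_sub hintlog1 hintlog2, ha, ← integral_const_mul]
    exact integral_congr_ae (Filter.Eventually.of_forall fun ω => (log_tanh_identity (Z ω)).symm)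
  -- Term 1
  have hterm1 : (∫ ω, Real.log (1 + Real.tanh (Z ω)) ∂P) ≤ Real.log (1 + b) := by
    have hpt : ∀ ω, Real.log (1 + Real.tanh (Z ω)) ≤
        Real.log (1 + b) + (Real.tanh (Z ω) - b) / (1 + b) := by
      intro ω
      have h1 : (0:ℝ) < 1 + Real.tanh (Z ω) := one_add_tanh_pos _
      have h2 := Real.log_le_sub_one_of_pos (div_pos h1 h01b)
      rw [Real.log_div h1.ne' h01b.ne'] at h2
      have e : (1 + Real.tanh (Z ω)) / (1 + b) - 1 = (Real.tanh (Z ω) - b) / (1 + b) := by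
        field_simp
        ring
      linarith [e ▸ h2]
    have hrint : Integrable (fun ω => Real.log (1 + b) + (Real.tanh (Z ω) - b) / (1 + b)) P :=
      (integrable_const _).add (hintTsub.div_const _)
    have hzero : ∫ ω, (Real.tanh (Z ω) - b) / (1 + b) ∂P = 0 := by
      rw [integral_div, integral_sub hintT (integrable_const b), integral_const,
        probReal_univ, one_smul, ← hb, sub_self, zero_div]
    have h3 := integral_mono_ae hintlog1 hrint (Filter.Eventually.of_forall hpt)
    rw [integral_add (integrable_const _) (hintTsub.div_const _), hzero, add_zero,
      integral_const, probReal_univ, one_smul] at h3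
    exact h3
  -- Term 2
  have hterm2 : Real.log (1 - b) - (∫ ω, Real.log (1 - Real.tanh (Z ω)) ∂P)
      ≤ 6 * L * D / (1 - b) := by
    have hpt : ∀ᵐ ω ∂P, Real.log (1 - b) - Real.log (1 - Real.tanh (Z ω)) ≤
        6 * L * |Real.tanh (Z ω) - b| / (1 - b) := by
      filter_upwards [hTbdd] with ω h
      exact lemmaP hL h hbabs
    have hlint : Integrable (fun ω => Real.log (1 - b) - Real.log (1 - Real.tanh (Z ω))) P :=
      (integrable_const _).sub hintlog2
    have hrint : Integrable (fun ω => 6 * L * |Real.tanh (Z ω) - b| / (1 - b)) P :=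
      (hintD.const_mul _).div_const _
    have hrhs : ∫ ω, 6 * L * |Real.tanh (Z ω) - b| / (1 - b) ∂P = 6 * L * D / (1 - b) := by
      rw [integral_div, integral_const_mul, ← hD]
    have h3 := integral_mono_ae hlint hrint hpt
    rw [integral_sub (integrable_const _) hintlog2, integral_const, probReal_univ,
      one_smul, hrhs] at h3
    exact h3
  -- combine
  have hs : 2 * a - Real.log ((1 + b) / (1 - b)) ≤ 6 * L * D / (1 - b) := by
    rw [Real.log_div h01b.ne' h1b.ne', h2a]
    linarith
  have hC := claimC a hb1 hb2
  have hmax : max 0 (2 * a - Real.log ((1 + b) / (1 - b))) ≤ 6 * L * D / (1 - b) :=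
    max_le (div_nonneg (mul_nonneg (by linarith) hDnn) h1b.le) hs
  calc Real.tanh a - b ≤ (1 - b) * max 0 (2 * a - Real.log ((1 + b) / (1 - b))) := hC
    _ ≤ (1 - b) * (6 * L * D / (1 - b)) := mul_le_mul_of_nonneg_left hmax h1b.le
    _ = 6 * L * D := by field_simp
    _ ≤ 20 * L * D := by nlinarith

/-- Lemma on the variance of `tanh`.
If `Z` is a random variable with `|Z| ≤ L` almost surely (`L ≥ 1`), then
`|tanh(E Z) - E tanh(Z)| ≤ 20 L · E|tanh(Z) - E tanh(Z)|`. -/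
theorem variance_of_tanh {Ω : Type*} [MeasurableSpace Ω]
    (P : Measure Ω) [IsProbabilityMeasure P]
    (Z : Ω → ℝ) (hZmeas : AEStronglyMeasurable Z P)
    (L : ℝ) (hL : 1 ≤ L) (hbdd : ∀ᵐ ω ∂P, |Z ω| ≤ L) :
    |Real.tanh (∫ ω, Z ω ∂P) - ∫ ω, Real.tanh (Z ω) ∂P| ≤
      20 * L * ∫ ω, |Real.tanh (Z ω) - ∫ ω', Real.tanh (Z ω') ∂P| ∂P := by
  rw [abs_sub_le_iff]
  refine ⟨one_sided P Z hZmeas L hL hbdd, ?_⟩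
  have H := one_sided P (fun ω => -Z ω) hZmeas.neg L hL (by simpa using hbdd)
  simp only [Real.tanh_neg, integral_neg, neg_sub_neg] at H
  simpa only [abs_sub_comm (∫ ω', Real.tanh (Z ω') ∂P)] using H

end Paper
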